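/- arXiv:1509.07550 — 2 statements merged into one kernel-verified Lean document; each statement's English description precedes it below -/
import Mathlib

section
/- For λ ∈ (0,∞), λ ≠ 1, the function n ↦ f(n,ℓ) = λ^{2(ℓ-1)}(1-λ^{2(n+1-ℓ)})(1-λ^2) / ((1-λ^{2ℓ})(1-λ^{2n})) is monotonically increasing in n for n ≥ ℓ. -/
-- sign lemma: for q > 0, q ≠ 1, m ≥ 1, (1 - q^m) has same sign as (1 - q)
lemma sign_aux (q : ℝ) (hq : 0 < q) (hne : q ≠ 1) (m : ℤ) (hm : 1 ≤ m) :
    0 < (1 - q ^ m) * (1 - q) := by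
  rcases hne.lt_or_gt with h | h
  · have h1 : q ^ m ≤ q ^ (1:ℤ) := zpow_le_zpow_right_of_le_one₀ hq h.le hm
    rw [zpow_one] at h1
    have h3 : 0 < 1 - q ^ m := by linarith
    exact mul_pos h3 (by linarith)
  · have h1 : q ^ (1:ℤ) ≤ q ^ m := zpow_le_zpow_right₀ h.le hm
    rw [zpow_one] at h1
    exact mul_pos_of_neg_of_neg (by linarith) (by linarith)

lemma step_aux (q : ℝ) (hq : 0 < q) (hne : q ≠ 1) (L m : ℤ) (hL : 2 ≤ L) (hm : L ≤ m) :
    q ^ (L - 1) * (1 - q ^ (m + 1 - L)) * (1 - q) / ((1 - q ^ L) * (1 - q ^ m)) ≤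
    q ^ (L - 1) * (1 - q ^ (m + 1 + 1 - L)) * (1 - q) / ((1 - q ^ L) * (1 - q ^ (m + 1))) := by
  have hq0 : q ≠ 0 := hq.ne'
  have sL : 0 < (1 - q ^ L) * (1 - q) := sign_aux q hq hne L (by omega)
  have sL1 : 0 < (1 - q ^ (L - 1)) * (1 - q) := sign_aux q hq hne (L - 1) (by omega)
  have sm : 0 < (1 - q ^ m) * (1 - q) := sign_aux q hq hne m (by omega)
  have sm1 : 0 < (1 - q ^ (m + 1)) * (1 - q) := sign_aux q hq hne (m + 1) (by omega)
  have hq1 : (1 - q) ≠ 0 := by intro h; exact hne (by linarith)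
  have hq1sq : 0 < (1 - q) ^ 2 := by positivity
  have hd1 : 0 < (1 - q ^ L) * (1 - q ^ m) := by nlinarith
  have hd2 : 0 < (1 - q ^ L) * (1 - q ^ (m + 1)) := by nlinarith
  rw [div_le_div_iff₀ hd1 hd2]
  -- power identities
  have epow : ∀ a : ℤ, q ^ (1 + a) = q * q ^ a := by
    intro a
    rw [zpow_add₀ hq0, zpow_one]
  have e1 : q ^ (m + 1 + 1 - L) = q * q ^ (m + 1 - L) := by
    rw [show m + 1 + 1 - L = 1 + (m + 1 - L) by ring]; exact epow _
  have e2 : q ^ (m + 1) = q * q ^ m := by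
    rw [show m + 1 = 1 + m by ring]; exact epow _
  have e3 : q ^ m = q ^ (L - 1) * q ^ (m + 1 - L) := by
    rw [← zpow_add₀ hq0]; congr 1; ring
  have e4 : q ^ L = q * q ^ (L - 1) := by
    have h := epow (L - 1)
    rw [show (1 : ℤ) + (L - 1) = L by ring] at h
    exact h
  set x := q ^ (m + 1 - L) with hx
  set y := q ^ (L - 1) with hy
  have hxp : 0 < x := zpow_pos hq _
  have hyp : 0 < y := zpow_pos hq _
  rw [e1, e2, e3, e4]
  have sL' : 0 < (1 - q * y) * (1 - q) := by rw [← e4]; exact sL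
  have sL1' : 0 < (1 - y) * (1 - q) := sL1
  have hA : 0 < (1 - q * y) * (1 - y) := by nlinarith [mul_pos sL' sL1']
  have key : 0 ≤ (x * y) * ((1 - q)^2) * ((1 - q * y) * (1 - y)) :=
    mul_nonneg (by positivity) hA.le
  nlinarith [key]

lemma mono_aux (q : ℝ) (hq : 0 < q) (hne : q ≠ 1) (L n n' : ℤ) (hL : 2 ≤ L)
    (hn : L ≤ n) (hnn' : n ≤ n') :
    q ^ (L - 1) * (1 - q ^ (n + 1 - L)) * (1 - q) / ((1 - q ^ L) * (1 - q ^ n)) ≤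
    q ^ (L - 1) * (1 - q ^ (n' + 1 - L)) * (1 - q) / ((1 - q ^ L) * (1 - q ^ n')) := by
  refine Int.le_induction (motive := fun k _ =>
      q ^ (L - 1) * (1 - q ^ (n + 1 - L)) * (1 - q) / ((1 - q ^ L) * (1 - q ^ n)) ≤
      q ^ (L - 1) * (1 - q ^ (k + 1 - L)) * (1 - q) / ((1 - q ^ L) * (1 - q ^ k)))
    (le_refl _) (fun m hm ih => ?_) n' hnn'
  exact le_trans ih (step_aux q hq hne L m hL (le_trans hn hm))

theorem stmt_1 (l : ℝ) (hl : 0 < l) (hne : l ≠ 1) (L : ℤ) (hL : 2 ≤ L)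
    (n n' : ℤ) (hn : L ≤ n) (hnn' : n ≤ n') :
    l ^ (2 * (L - 1)) * (1 - l ^ (2 * (n + 1 - L))) * (1 - l ^ (2 : ℤ)) /
      ((1 - l ^ (2 * L)) * (1 - l ^ (2 * n))) ≤
    l ^ (2 * (L - 1)) * (1 - l ^ (2 * (n' + 1 - L))) * (1 - l ^ (2 : ℤ)) /
      ((1 - l ^ (2 * L)) * (1 - l ^ (2 * n'))) := by
  have hq : (0:ℝ) < l ^ (2:ℤ) := by positivity
  have hne' : l ^ (2:ℤ) ≠ 1 := by
    intro h
    have h2 : l * l = 1 := by rw [zpow_two] at h; exact h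
    have : (l - 1) * (l + 1) = 0 := by linear_combination h2
    rcases mul_eq_zero.mp this with h' | h'
    · exact hne (by linarith)
    · linarith
  have key := mono_aux (l ^ (2:ℤ)) hq hne' L n n' hL hn hnn'
  simp only [← zpow_mul] at key
  exact key
end

section
/- Let m₁ > 0, m₂ ≥ 0 and consider the lattice parallelogram P(b₁,b₂,L₁,L₂) = {x ∈ ℤ² : 0 ≤ (m₁(x₁-b₁) + m₂(x₂-b₂))/m₁ < L₁, 0 ≤ x₂-b₂ < L₂}. If L₁ ≥ m₂/m₁ + 1, then P(b₁,b₂,L₁,L₂) is connected as a subgraph of ℤ² with nearest-neighbor edges. -/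
theorem stmt_12 (m₁ m₂ b₁ : ℝ) (hm₁ : 0 < m₁) (hm₂ : 0 ≤ m₂)
    (b₂ L₁ L₂ : ℤ) (hL₁ : 1 ≤ L₁) (hL₂ : 1 ≤ L₂)
    (hslant : (m₂ / m₁ + 1 : ℝ) ≤ L₁)
    (P : Set (ℤ × ℤ))
    (hP : P = {x : ℤ × ℤ |
      0 ≤ (m₁ * ((x.1 : ℝ) - b₁) + m₂ * ((x.2 : ℝ) - b₂)) / m₁ ∧
      (m₁ * ((x.1 : ℝ) - b₁) + m₂ * ((x.2 : ℝ) - b₂)) / m₁ < L₁ ∧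
      b₂ ≤ x.2 ∧ x.2 < b₂ + L₂}) :
    ∀ p ∈ P, ∀ q ∈ P,
      Relation.ReflTransGen
        (fun a b : ℤ × ℤ => a ∈ P ∧ b ∈ P ∧ |a.1 - b.1| + |a.2 - b.2| = 1) p q := by
  set R : ℤ × ℤ → ℤ × ℤ → Prop :=
    fun a b : ℤ × ℤ => a ∈ P ∧ b ∈ P ∧ |a.1 - b.1| + |a.2 - b.2| = 1 with hR
  set s : ℝ := m₂ / m₁ with hs_def
  have hs : 0 ≤ s := div_nonneg hm₂ hm₁.le
  have hsL : s + 1 ≤ (L₁ : ℝ) := hslant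
  have hL1R : (1 : ℝ) ≤ (L₁ : ℝ) := by linarith
  set f : ℤ → ℝ := fun c => b₁ - s * ((c : ℝ) - b₂) with hf_def
  have memP : ∀ x : ℤ × ℤ, x ∈ P ↔
      (f x.2 ≤ x.1 ∧ (x.1 : ℝ) < f x.2 + L₁ ∧ b₂ ≤ x.2 ∧ x.2 < b₂ + L₂) := by
    subst hP
    intro x
    simp only [Set.mem_setOf_eq]
    have key : (m₁ * ((x.1 : ℝ) - b₁) + m₂ * ((x.2 : ℝ) - b₂)) / m₁
        = (x.1 : ℝ) - f x.2 := by
      simp only [hf_def, hs_def]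
      field_simp
      ring
    rw [key]
    constructor
    · rintro ⟨h1, h2, h3, h4⟩
      exact ⟨by linarith, by linarith, h3, h4⟩
    · rintro ⟨h1, h2, h3, h4⟩
      exact ⟨by linarith, by linarith, h3, h4⟩
  have Rsymm : Symmetric R := by
    rintro a b ⟨h1, h2, h3⟩
    refine ⟨h2, h1, ?_⟩
    rw [abs_sub_comm b.1 a.1, abs_sub_comm b.2 a.2]
    exact h3
  have RTGsymm : Symmetric (Relation.ReflTransGen R) := by
    intro a b h; exact (@Relation.ReflTransGen.stdSymm _ R ⟨Rsymm⟩).symm a b h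
  -- horizontal connectivity, increasing direction
  have hor : ∀ c a d : ℤ, a ≤ d → (a, c) ∈ P → (d, c) ∈ P →
      Relation.ReflTransGen R (a, c) (d, c) := by
    intro c a
    have key : ∀ d : ℤ, a ≤ d → ((a, c) ∈ P → (d, c) ∈ P →
        Relation.ReflTransGen R (a, c) (d, c)) := by
      refine Int.le_induction ?_ ?_
      · intro _ _; exact Relation.ReflTransGen.refl
      · intro d had ih ha hd1
        have hdm : (d, c) ∈ P := by
          rw [memP] at ha hd1 ⊢
          obtain ⟨h1, h2, h3, h4⟩ := ha
          obtain ⟨h1', h2', _, _⟩ := hd1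
          have hda : (a : ℝ) ≤ (d : ℝ) := by exact_mod_cast had
          have hdd : (d : ℝ) ≤ (d : ℝ) + 1 := by linarith
          have hcast : ((d + 1 : ℤ) : ℝ) = (d : ℝ) + 1 := by push_cast; ring
          exact ⟨by simpa using le_trans h1 hda, by rw [hcast] at h2'; linarith, h3, h4⟩
        refine Relation.ReflTransGen.tail (ih ha hdm) ?_
        refine ⟨hdm, hd1, ?_⟩
        simp
    intro d had ha hd
    exact key d had ha hd
  have hor2 : ∀ c a d : ℤ, (a, c) ∈ P → (d, c) ∈ P →
      Relation.ReflTransGen R (a, c) (d, c) := by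
    intro c a d ha hd
    rcases le_total a d with h | h
    · exact hor c a d h ha hd
    · exact RTGsymm (hor c d a h hd ha)
  -- anchor membership
  have anchor : ∀ c : ℤ, b₂ ≤ c → c < b₂ + L₂ → (⌈f c⌉, c) ∈ P := by
    intro c h1 h2
    rw [memP]
    refine ⟨Int.le_ceil _, ?_, h1, h2⟩
    have := Int.ceil_lt_add_one (f c)
    linarith
  have anchor_up : ∀ c : ℤ, b₂ ≤ c → c + 1 < b₂ + L₂ → (⌈f c⌉, c + 1) ∈ P := by
    intro c h1 h2
    rw [memP]
    have hfc1 : f (c + 1) = f c - s := by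
      simp only [hf_def]
      push_cast
      ring
    have hc1 : f (c + 1) ≤ (⌈f c⌉ : ℝ) := by
      have := Int.le_ceil (f c)
      rw [hfc1]; linarith
    have hc2 : ((⌈f c⌉ : ℤ) : ℝ) < f (c + 1) + L₁ := by
      have := Int.ceil_lt_add_one (f c)
      rw [hfc1]; linarith
    exact ⟨hc1, hc2, by show b₂ ≤ c + 1; omega, h2⟩
  -- main induction on row difference
  have main : ∀ k : ℕ, ∀ p q : ℤ × ℤ, p ∈ P → q ∈ P → q.2 - p.2 = (k : ℤ) →
      Relation.ReflTransGen R p q := by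
    intro k
    induction k with
    | zero =>
      rintro ⟨p1, p2⟩ ⟨q1, q2⟩ hp hq h
      have : q2 = p2 := by simp only at h; omega
      subst this
      exact hor2 _ p1 q1 hp hq
    | succ k ih =>
      rintro ⟨p1, p2⟩ ⟨q1, q2⟩ hp hq h
      have h' : q2 - p2 = (k : ℤ) + 1 := by push_cast at h; exact h
      have hb1 : b₂ ≤ p2 := ((memP _).1 hp).2.2.1
      have hq2 : q2 < b₂ + L₂ := ((memP _).1 hq).2.2.2
      have hp21 : p2 + 1 < b₂ + L₂ := by omega
      have h1 : (⌈f p2⌉, p2) ∈ P := anchor p2 hb1 (by omega)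
      have h2 : (⌈f p2⌉, p2 + 1) ∈ P := anchor_up p2 hb1 hp21
      have step1 : Relation.ReflTransGen R (p1, p2) (⌈f p2⌉, p2) := hor2 p2 p1 _ hp h1
      have step2 : R (⌈f p2⌉, p2) (⌈f p2⌉, p2 + 1) := by
        refine ⟨h1, h2, ?_⟩
        simp
      have step3 : Relation.ReflTransGen R (⌈f p2⌉, p2 + 1) (q1, q2) :=
        ih _ _ h2 hq (by simp; omega)
      exact (step1.tail step2).trans step3
  intro p hp q hq
  rcases le_total p.2 q.2 with h | h
  · exact main (q.2 - p.2).toNat p q hp hq (by omega)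
  · exact RTGsymm (main (p.2 - q.2).toNat q p hq hp (by omega))
end
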